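/- Let p be a complete partial metric on a nonempty set X and let f : X → X. Suppose there exist control functions ψ and φ such that for all x, y ∈ X, ψ(p(fx,fy)) ≤ ψ(M_p(x,y)) − φ(M_p(x,y)), where M_p(x,y) = max{p(x,y), p(x,fx), p(y,fy), p(f²x,y), p(f²x,fx), p(f²x,fy), (p(x,fy) + p(y,fx))/2}. Then f has a unique fixed point x* ∈ X, and for any x_0 ∈ X, the sequence x_0, f(x_0), f²(x_0), … converges to x* (that is, p(f^n(x_0), x*) → p(x*,x*)). -/

import Mathlib

open Filter Topology Set MeasureTheory

/-- A partial metric on a set `X`. -/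
def IsPartialMetric {X : Type*} (p : X → X → ℝ) : Prop :=
  (∀ x y, 0 ≤ p x y) ∧
  (∀ x y, x = y ↔ (p x x = p x y ∧ p y y = p x y)) ∧
  (∀ x y, p x x ≤ p x y) ∧
  (∀ x y, p x y = p y x) ∧
  (∀ x y z, p x z ≤ p x y + p y z - p y y)

/-- The induced metric `p^S`. -/
def pS {X : Type*} (p : X → X → ℝ) (x y : X) : ℝ := 2 * p x y - p x x - p y y

/-- Cauchy sequence in a partial metric space. -/
def PCauchy {X : Type*} (p : X → X → ℝ) (x : ℕ → X) : Prop :=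
  ∃ a : ℝ, Tendsto (fun nm : ℕ × ℕ => p (x nm.1) (x nm.2)) atTop (nhds a)

/-- Convergence of a sequence in a partial metric space (in the sense used for completeness). -/
def PConvergesTo {X : Type*} (p : X → X → ℝ) (x : ℕ → X) (l : X) : Prop :=
  Tendsto (fun nm : ℕ × ℕ => p (x nm.1) (x nm.2)) atTop (nhds (p l l)) ∧
  Tendsto (fun n => p (x n) l) atTop (nhds (p l l))

/-- Completeness of a partial metric space. -/
def PComplete {X : Type*} (p : X → X → ℝ) : Prop :=
  ∀ x : ℕ → X, PCauchy p x → ∃ l, PConvergesTo p x l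

/-- The control function ψ : [0,∞) → [0,∞): continuous, nondecreasing, ψ t = 0 ↔ t = 0. -/
def IsPsiControl (ψ : ℝ → ℝ) : Prop :=
  (∀ t, 0 ≤ t → 0 ≤ ψ t) ∧ ContinuousOn ψ (Ici 0) ∧ MonotoneOn ψ (Ici 0) ∧
  (∀ t, 0 ≤ t → (ψ t = 0 ↔ t = 0))

/-- The control function φ : [0,∞) → [0,∞): lower semicontinuous, φ t = 0 ↔ t = 0. -/
def IsPhiControl (φ : ℝ → ℝ) : Prop :=
  (∀ t, 0 ≤ t → 0 ≤ φ t) ∧ LowerSemicontinuousOn φ (Ici 0) ∧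
  (∀ t, 0 ≤ t → (φ t = 0 ↔ t = 0))

/-- (Sequential) continuity of a self-map on `(X, p^S)`. -/
def ContinuousPS {X : Type*} (p : X → X → ℝ) (f : X → X) : Prop :=
  ∀ (x : ℕ → X) (u : X), Tendsto (fun n => pS p (x n) u) atTop (nhds 0) →
    Tendsto (fun n => pS p (f (x n)) (f u)) atTop (nhds 0)

/-- Compatibility of a pair of self-maps. -/
def Compatible {X : Type*} (p : X → X → ℝ) (f S : X → X) : Prop :=
  ∀ (x : ℕ → X) (u : X),
    Tendsto (fun n => pS p (f (x n)) u) atTop (nhds 0) →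
    Tendsto (fun n => pS p (S (x n)) u) atTop (nhds 0) →
    Tendsto (fun n => pS p (f (S (x n))) (S (f (x n)))) atTop (nhds 0)

/-- Weak compatibility of a pair of self-maps. -/
def WeaklyCompatible {X : Type*} (f S : X → X) : Prop :=
  ∀ x, f x = S x → f (S x) = S (f x)

/-- Order condition (OC). -/
def OrderCondition {X : Type*} [PartialOrder X] (p : X → X → ℝ) : Prop :=
  ∀ (x y : ℕ → X) (u : X),
    (∀ n, x n ≤ y n) → (∀ n, x (n + 1) ≤ x n) →
    Tendsto (fun n => pS p (x n) u) atTop (nhds 0) →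
    ∀ n, u ≤ y n

/-- The quantity `M_p(x,y)` for four maps. -/
noncomputable def Mp {X : Type*} (p : X → X → ℝ) (f g S T : X → X) (x y : X) : ℝ :=
  max (max (p (S x) (T y)) (p (f x) (S x)))
      (max (p (g y) (T y)) ((p (S x) (g y) + p (f x) (T y)) / 2))

/-- The topology `τ_p` induced by a partial metric. -/
def tauP {X : Type*} (p : X → X → ℝ) : TopologicalSpace X :=
  TopologicalSpace.generateFrom {B | ∃ x ε, 0 < ε ∧ B = {y | p x y < p x x + ε}}

/-- Distance from a point to a set, `p(x,A)`. -/
noncomputable def pDist {X : Type*} (p : X → X → ℝ) (x : X) (A : Set X) : ℝ := sInf (p x '' A)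

/-- `δ_p(A,B)`. -/
noncomputable def deltaP {X : Type*} (p : X → X → ℝ) (A B : Set X) : ℝ :=
  sSup ((fun a => pDist p a B) '' A)

/-- The partial Hausdorff metric `H_p(A,B)`. -/
noncomputable def Hp {X : Type*} (p : X → X → ℝ) (A B : Set X) : ℝ :=
  max (deltaP p A B) (deltaP p B A)

/-- Boundedness of a subset of a partial metric space. -/
def PBounded {X : Type*} (p : X → X → ℝ) (A : Set X) : Prop :=
  ∃ x₀ M, (0:ℝ) ≤ M ∧ ∀ a ∈ A, p x₀ a < p a a + M

/-- Membership in `CB^p(X)`: nonempty, closed in `τ_p`, and bounded. -/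
def MemCBp {X : Type*} (p : X → X → ℝ) (A : Set X) : Prop :=
  A.Nonempty ∧ @IsClosed X (tauP p) A ∧ PBounded p A

/-- Cauchy sequence with respect to the induced metric `p^S`. -/
def MCauchy {X : Type*} (p : X → X → ℝ) (x : ℕ → X) : Prop :=
  ∀ ε : ℝ, 0 < ε → ∃ N, ∀ m ≥ N, ∀ n ≥ N, pS p (x m) (x n) < ε

/-- The quantity `M_p(x,y)` for a single map (seven terms). -/
noncomputable def Mp1 {X : Type*} (p : X → X → ℝ) (f : X → X) (x y : X) : ℝ :=
  max (max (max (p x y) (p x (f x))) (max (p y (f y)) (p (f (f x)) y)))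
      (max (max (p (f (f x)) (f x)) (p (f (f x)) (f y)))
           ((p x (f y) + p y (f x)) / 2))

section FPAux

variable {X : Type*} {p : X → X → ℝ} {f : X → X} {ψ φ : ℝ → ℝ}

private lemma fp_ptri2 (hp : IsPartialMetric p) (x y z : X) : p x z ≤ p x y + p y z := by
  have h := hp.2.2.2.2 x y z
  have h0 := hp.1 y y
  linarith

private lemma fp_Mp1_le {x y : X} {c : ℝ}
    (h1 : p x y ≤ c) (h2 : p x (f x) ≤ c) (h3 : p y (f y) ≤ c)
    (h4 : p (f (f x)) y ≤ c) (h5 : p (f (f x)) (f x) ≤ c)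
    (h6 : p (f (f x)) (f y) ≤ c) (h7 : (p x (f y) + p y (f x)) / 2 ≤ c) :
    Mp1 p f x y ≤ c :=
  max_le (max_le (max_le h1 h2) (max_le h3 h4)) (max_le (max_le h5 h6) h7)

private lemma fp_Mp1_lt {x y : X} {c : ℝ}
    (h1 : p x y < c) (h2 : p x (f x) < c) (h3 : p y (f y) < c)
    (h4 : p (f (f x)) y < c) (h5 : p (f (f x)) (f x) < c)
    (h6 : p (f (f x)) (f y) < c) (h7 : (p x (f y) + p y (f x)) / 2 < c) :
    Mp1 p f x y < c :=
  max_lt (max_lt (max_lt h1 h2) (max_lt h3 h4)) (max_lt (max_lt h5 h6) h7)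

private lemma fp_le_Mp1_1 (p : X → X → ℝ) (f : X → X) (x y : X) :
    p x y ≤ Mp1 p f x y :=
  le_max_of_le_left (le_max_of_le_left (le_max_left _ _))

private lemma fp_le_Mp1_3 (p : X → X → ℝ) (f : X → X) (x y : X) :
    p y (f y) ≤ Mp1 p f x y :=
  le_max_of_le_left (le_max_of_le_right (le_max_left _ _))

private lemma fp_phi_pos (hφ : IsPhiControl φ) {t : ℝ} (ht : 0 < t) : 0 < φ t :=
  lt_of_le_of_ne (hφ.1 t ht.le) fun h => absurd ((hφ.2.2 t ht.le).1 h.symm) ht.ne'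

private lemma fp_eq_zero (hφ : IsPhiControl φ) {t : ℝ} (ht : 0 ≤ t) (h : φ t ≤ 0) : t = 0 :=
  (hφ.2.2 t ht).1 (le_antisymm h (hφ.1 t ht))

private lemma fp_window (hψ : IsPsiControl ψ) (hφ : IsPhiControl φ) {ε : ℝ} (hε : 0 < ε) :
    ∃ δ > 0, ∀ q M : ℝ, 0 ≤ q → 0 ≤ M → |q - ε| < δ → |M - ε| < δ →
      ¬ ψ q ≤ ψ M - φ M := by
  have hφε : 0 < φ ε := fp_phi_pos hφ hε
  have hmem : ε ∈ Ici (0:ℝ) := mem_Ici.2 hε.le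
  have h1 : ∀ᶠ t in 𝓝[Ici (0:ℝ)] ε, φ ε / 2 < φ t :=
    hφ.2.1 ε hmem (φ ε / 2) (half_lt_self hφε)
  have hψc : Tendsto ψ (𝓝[Ici (0:ℝ)] ε) (𝓝 (ψ ε)) := hψ.2.1 ε hmem
  have h2 : ∀ᶠ t in 𝓝[Ici (0:ℝ)] ε, |ψ t - ψ ε| < φ ε / 4 := by
    have := Metric.tendsto_nhds.1 hψc (φ ε / 4) (by linarith)
    simpa [Real.dist_eq] using this
  obtain ⟨δ, hδ, hsub⟩ := Metric.mem_nhdsWithin_iff.1 (h1.and h2)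
  refine ⟨δ, hδ, fun q M hq hM hq' hM' hcon => ?_⟩
  have hqmem := hsub ⟨Metric.mem_ball.2 (by rwa [Real.dist_eq]), hq⟩
  have hMmem := hsub ⟨Metric.mem_ball.2 (by rwa [Real.dist_eq]), hM⟩
  obtain ⟨hq1, hq2⟩ := hqmem
  obtain ⟨hM1, hM2⟩ := hMmem
  have hA := abs_lt.1 hq2
  have hB := abs_lt.1 hM2
  linarith [hA.1, hA.2, hB.1, hB.2]

private lemma fp_unique (p : X → X → ℝ) (hp : IsPartialMetric p) (f : X → X)
    (hφ : IsPhiControl φ)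
    (hcontr : ∀ x y : X, ψ (p (f x) (f y)) ≤ ψ (Mp1 p f x y) - φ (Mp1 p f x y))
    {z w : X} (hz : f z = z) (hw : f w = w) : w = z := by
  obtain ⟨hpos, heq, hsml, hsym, htri⟩ := hp
  have hM : Mp1 p f z w = p z w := by
    refine le_antisymm (fp_Mp1_le ?_ ?_ ?_ ?_ ?_ ?_ ?_) (fp_le_Mp1_1 p f z w)
    · exact le_refl _
    · rw [hz]; exact hsml z w
    · rw [hw]
      calc p w w ≤ p w z := hsml _ _
        _ = p z w := hsym _ _
    · rw [hz, hz]
    · rw [hz, hz]; exact hsml z w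
    · rw [hz, hz, hw]
    · rw [hw, hz]
      have := hsym w z
      linarith
  have hc := hcontr z w
  rw [hz, hw, hM] at hc
  have h0 : p z w = 0 := fp_eq_zero hφ (hpos _ _) (by linarith)
  have h1 : p z z = 0 := le_antisymm (h0 ▸ hsml z w) (hpos _ _)
  have h2 : p w w = 0 := by
    refine le_antisymm ?_ (hpos _ _)
    calc p w w ≤ p w z := hsml _ _
      _ = p z w := hsym _ _
      _ = 0 := h0
  exact ((heq z w).2 ⟨by rw [h1, h0], by rw [h2, h0]⟩).symm

private lemma fp_main (p : X → X → ℝ) (hp : IsPartialMetric p)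
    (hcomplete : PComplete p) (f : X → X)
    (hψ : IsPsiControl ψ) (hφ : IsPhiControl φ)
    (hcontr : ∀ x y : X, ψ (p (f x) (f y)) ≤ ψ (Mp1 p f x y) - φ (Mp1 p f x y))
    (x₀ : X) :
    ∃ z : X, f z = z ∧ p z z = 0 ∧
      Tendsto (fun n => p (f^[n] x₀) z) atTop (nhds 0) := by
  classical
  obtain ⟨hpos, heq, hsml, hsym, htri⟩ := hp
  have hp' : IsPartialMetric p := ⟨hpos, heq, hsml, hsym, htri⟩
  obtain ⟨x, hx0, hx⟩ : ∃ x : ℕ → X, (∀ n, x n = f^[n] x₀) ∧ ∀ n, x (n + 1) = f (x n) :=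
    ⟨fun n => f^[n] x₀, fun _ => rfl, fun n => Function.iterate_succ_apply' f n x₀⟩
  obtain ⟨a, ha⟩ : ∃ a : ℕ → ℝ, ∀ n, a n = p (x n) (x (n + 1)) := ⟨_, fun _ => rfl⟩
  have ha' : ∀ n, a (n + 1) = p (x (n + 1)) (x (n + 2)) := fun n => ha (n + 1)
  have hanneg : ∀ n, 0 ≤ a n := fun n => by rw [ha]; exact hpos _ _
  -- Step 1 : basic contraction along the orbit
  have key : ∀ n, a (n + 1) ≤ a n ∧ ψ (a (n + 1)) ≤ ψ (a n) - φ (a n) := by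
    intro n
    have e1 : f (x n) = x (n + 1) := (hx n).symm
    have e1' : f (x (n + 1)) = x (n + 2) := (hx (n + 1)).symm
    have e2 : f (f (x n)) = x (n + 2) := by rw [e1, e1']
    have hc := hcontr (x n) (x (n + 1))
    rw [e1, e1'] at hc
    rw [← ha' n] at hc
    have l1 : a n ≤ max (a n) (a (n + 1)) := le_max_left _ _
    have l2 : a (n + 1) ≤ max (a n) (a (n + 1)) := le_max_right _ _
    have hub : Mp1 p f (x n) (x (n + 1)) ≤ max (a n) (a (n + 1)) := by
      refine fp_Mp1_le ?_ ?_ ?_ ?_ ?_ ?_ ?_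
      · rw [← ha n]; exact l1
      · rw [e1, ← ha n]; exact l1
      · rw [e1', ← ha' n]; exact l2
      · rw [e2, hsym (x (n + 2)) (x (n + 1)), ← ha' n]; exact l2
      · rw [e2, e1, hsym (x (n + 2)) (x (n + 1)), ← ha' n]; exact l2
      · rw [e2, e1']
        refine le_trans (hsml (x (n + 2)) (x (n + 1))) ?_
        rw [hsym (x (n + 2)) (x (n + 1)), ← ha' n]; exact l2
      · rw [e1', e1]
        have t := htri (x n) (x (n + 1)) (x (n + 2))
        have l1' : p (x n) (x (n + 1)) ≤ max (a n) (a (n + 1)) := by rw [← ha n]; exact l1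
        have l2' : p (x (n + 1)) (x (n + 2)) ≤ max (a n) (a (n + 1)) := by
          rw [← ha' n]; exact l2
        have hs : p (x (n + 1)) (x (n + 1)) ≤ p (x (n + 1)) (x (n + 2)) := hsml _ _
        linarith
    have hlb1 : a n ≤ Mp1 p f (x n) (x (n + 1)) := by
      rw [ha n]; exact fp_le_Mp1_1 p f (x n) (x (n + 1))
    have hlb3 : a (n + 1) ≤ Mp1 p f (x n) (x (n + 1)) := by
      have h := fp_le_Mp1_3 p f (x n) (x (n + 1))
      rw [e1'] at h
      rw [ha' n]; exact h
    by_cases hcase : a (n + 1) ≤ a n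
    · have hMeq : Mp1 p f (x n) (x (n + 1)) = a n := by
        refine le_antisymm ?_ hlb1
        rwa [max_eq_left hcase] at hub
      rw [hMeq] at hc
      exact ⟨hcase, hc⟩
    · push_neg at hcase
      have hMeq : Mp1 p f (x n) (x (n + 1)) = a (n + 1) := by
        refine le_antisymm ?_ hlb3
        rwa [max_eq_right hcase.le] at hub
      rw [hMeq] at hc
      have h0 : φ (a (n + 1)) ≤ 0 := by linarith
      have hz : a (n + 1) = 0 := fp_eq_zero hφ (hanneg _) h0
      exact absurd (hz ▸ hcase) (not_lt.2 (hanneg n))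
  -- Step 2 : a → 0
  have hant : Antitone a := antitone_nat_of_succ_le fun n => (key n).1
  have hbdd : BddBelow (Set.range a) := ⟨0, by rintro t ⟨n, rfl⟩; exact hanneg n⟩
  have haten : Tendsto a atTop (nhds (⨅ n, a n)) := tendsto_atTop_ciInf hant hbdd
  have hr0 : 0 ≤ ⨅ n, a n := le_ciInf hanneg
  have hinf0 : (⨅ n, a n) = 0 := by
    by_contra hne
    have hrpos : 0 < ⨅ n, a n := hr0.lt_of_ne (Ne.symm hne)
    have hφr : 0 < φ (⨅ n, a n) := fp_phi_pos hφ hrpos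
    have hin : Tendsto a atTop (nhdsWithin (⨅ n, a n) (Ici 0)) :=
      tendsto_nhdsWithin_of_tendsto_nhds_of_eventually_within a haten
        (Eventually.of_forall hanneg)
    have hψt : Tendsto (fun n => ψ (a n)) atTop (nhds (ψ (⨅ n, a n))) :=
      Filter.Tendsto.comp (hψ.2.1 _ (mem_Ici.2 hr0)) hin
    have hψt' : Tendsto (fun n => ψ (a (n + 1))) atTop (nhds (ψ (⨅ n, a n))) := by
      have := hψt.comp (tendsto_add_atTop_nat 1)
      simpa [Function.comp_def] using this
    have hdiff : Tendsto (fun n => ψ (a n) - ψ (a (n + 1))) atTop (nhds 0) := by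
      have := hψt.sub hψt'
      simpa using this
    have h1 : ∀ᶠ n in atTop, ψ (a n) - ψ (a (n + 1)) < φ (⨅ n, a n) / 2 :=
      hdiff.eventually (gt_mem_nhds (half_pos hφr))
    have h2 : ∀ᶠ n in atTop, φ (⨅ n, a n) / 2 < φ (a n) :=
      hin.eventually (hφ.2.1 _ (mem_Ici.2 hr0) _ (half_lt_self hφr))
    obtain ⟨n, hn1, hn2⟩ := (h1.and h2).exists
    linarith [(key n).2]
  have haten0 : Tendsto a atTop (nhds 0) := by rwa [hinf0] at haten
  have hsmalla : ∀ ε : ℝ, 0 < ε → ∃ N, ∀ i, N ≤ i → a i < ε := by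
    intro ε hε
    have := eventually_atTop.1 (haten0.eventually (gt_mem_nhds hε))
    obtain ⟨N, hN⟩ := this
    exact ⟨N, fun i hi => hN i hi⟩
  -- Step 3 : the orbit is Cauchy
  have hCauchy : ∀ ε : ℝ, 0 < ε → ∃ N, ∀ m, N ≤ m → ∀ n, N ≤ n → p (x m) (x n) < ε := by
    by_contra hcon
    push_neg at hcon
    obtain ⟨ε, hε, hbad⟩ := hcon
    obtain ⟨δ, hδ, hwin⟩ := fp_window hψ hφ hε
    have hδ'pos : 0 < min (δ / 3) ε := lt_min (by linarith) hε
    have hδ'3 : min (δ / 3) ε ≤ δ / 3 := min_le_left _ _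
    have hδ'ε : min (δ / 3) ε ≤ ε := min_le_right _ _
    obtain ⟨k₀, hk₀⟩ := hsmalla _ hδ'pos
    have main : ∀ n m : ℕ, k₀ + 1 ≤ n → n ≤ m → ε ≤ p (x n) (x m) → False := by
      intro n m hkn hnm hge
      have hne : n ≠ m := by
        rintro rfl
        have h1 : p (x n) (x n) ≤ p (x n) (x (n + 1)) := hsml _ _
        have h2 := hk₀ n (by omega)
        rw [ha] at h2
        linarith
      have hnm' : n < m := lt_of_le_of_ne hnm hne
      have hexists : ∃ j, n < j ∧ ε ≤ p (x n) (x j) := ⟨m, hnm', hge⟩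
      have hspec := Nat.find_spec hexists
      have hmin : ∀ j, j < Nat.find hexists → ¬(n < j ∧ ε ≤ p (x n) (x j)) :=
        fun j hj => Nat.find_min hexists hj
      obtain ⟨nc, rfl⟩ : ∃ nc, n = nc + 1 := ⟨n - 1, by omega⟩
      set mm := Nat.find hexists with hmmdef
      clear_value mm
      obtain ⟨mc, rfl⟩ : ∃ mc, mm = mc + 1 := ⟨mm - 1, by omega⟩
      have hmcge : nc + 1 ≤ mc := by omega
      have hanc := hk₀ nc (by omega)
      have hamc := hk₀ mc (by omega)
      have hamm := hk₀ (mc + 1) (by omega)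
      rw [ha] at hanc hamc hamm
      have e1 : f (x mc) = x (mc + 1) := (hx mc).symm
      have e1' : f (x (mc + 1)) = x (mc + 1 + 1) := (hx (mc + 1)).symm
      have e2 : f (f (x mc)) = x (mc + 1 + 1) := by rw [e1, e1']
      have en : f (x nc) = x (nc + 1) := (hx nc).symm
      have hprev : p (x (nc + 1)) (x mc) < ε := by
        by_cases hcase : nc + 1 < mc
        · have h := hmin mc (Nat.lt_succ_self mc)
          rw [not_and] at h
          exact not_le.1 (h hcase)
        · have hceq : mc = nc + 1 := by omega
          subst hceq
          have h1 : p (x (nc + 1)) (x (nc + 1)) ≤ p (x (nc + 1)) (x (nc + 1 + 1)) := hsml _ _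
          have h2 := hk₀ (nc + 1) (by omega)
          rw [ha] at h2
          linarith
      have hqge : ε ≤ p (x (nc + 1)) (x (mc + 1)) := hspec.2
      have hqlt : p (x (nc + 1)) (x (mc + 1)) < ε + min (δ / 3) ε := by
        have t := fp_ptri2 hp' (x (nc + 1)) (x mc) (x (mc + 1))
        linarith
      -- symmetry facts
      have s1 : p (x (mc + 1)) (x (nc + 1)) = p (x (nc + 1)) (x (mc + 1)) := hsym _ _
      have s2 : p (x (nc + 1)) (x nc) = p (x nc) (x (nc + 1)) := hsym _ _
      have s3 : p (x (mc + 1)) (x mc) = p (x mc) (x (mc + 1)) := hsym _ _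
      have s4 : p (x nc) (x mc) = p (x mc) (x nc) := hsym _ _
      have s5 : p (x (mc + 1 + 1)) (x (mc + 1)) = p (x (mc + 1)) (x (mc + 1 + 1)) := hsym _ _
      -- triangle facts
      have T1 : p (x mc) (x nc) ≤ p (x mc) (x (mc + 1)) + p (x (mc + 1)) (x nc) :=
        fp_ptri2 hp' _ _ _
      have T2 : p (x (mc + 1)) (x nc) ≤ p (x (mc + 1)) (x (nc + 1)) + p (x (nc + 1)) (x nc) :=
        fp_ptri2 hp' _ _ _
      have T3 : p (x (nc + 1)) (x (mc + 1)) ≤ p (x (nc + 1)) (x nc) + p (x nc) (x (mc + 1)) :=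
        fp_ptri2 hp' _ _ _
      have T4 : p (x nc) (x (mc + 1)) ≤ p (x nc) (x mc) + p (x mc) (x (mc + 1)) :=
        fp_ptri2 hp' _ _ _
      have T5 : p (x (mc + 1 + 1)) (x nc) ≤
          p (x (mc + 1 + 1)) (x (mc + 1)) + p (x (mc + 1)) (x nc) := fp_ptri2 hp' _ _ _
      have T6 : p (x (mc + 1 + 1)) (x (nc + 1)) ≤
          p (x (mc + 1 + 1)) (x (mc + 1)) + p (x (mc + 1)) (x (nc + 1)) := fp_ptri2 hp' _ _ _
      have T7 : p (x mc) (x (nc + 1)) ≤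
          p (x mc) (x (mc + 1)) + p (x (mc + 1)) (x (nc + 1)) := fp_ptri2 hp' _ _ _
      have hc := hcontr (x mc) (x nc)
      rw [e1, en] at hc
      rw [hsym (x (mc + 1)) (x (nc + 1))] at hc
      have hub : Mp1 p f (x mc) (x nc) < ε + δ := by
        refine fp_Mp1_lt ?_ ?_ ?_ ?_ ?_ ?_ ?_
        · linarith
        · rw [e1]; linarith
        · rw [en]; linarith
        · rw [e2]; linarith
        · rw [e2, e1]; linarith
        · rw [e2, en]; linarith
        · rw [en, e1]; linarith
      have hlbM : ε - δ < Mp1 p f (x mc) (x nc) := by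
        have h := fp_le_Mp1_1 p f (x mc) (x nc)
        linarith
      have hMnn : (0:ℝ) ≤ Mp1 p f (x mc) (x nc) :=
        le_trans (hpos (x mc) (x nc)) (fp_le_Mp1_1 p f (x mc) (x nc))
      exact hwin _ _ (hpos _ _) hMnn
        (abs_lt.2 ⟨by linarith, by linarith⟩)
        (abs_lt.2 ⟨by linarith, by linarith⟩) hc
    obtain ⟨m₁, hm₁, n₁, hn₁, hp₁⟩ := hbad (k₀ + 1)
    rcases le_total m₁ n₁ with h | h
    · exact main m₁ n₁ hm₁ h hp₁
    · exact main n₁ m₁ hn₁ h (hsym (x m₁) (x n₁) ▸ hp₁)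
  -- Step 4 : completeness gives a limit
  have hpair : Tendsto (fun nm : ℕ × ℕ => p (x nm.1) (x nm.2)) atTop (nhds 0) := by
    rw [Metric.tendsto_nhds]
    intro ε hε
    obtain ⟨N, hN⟩ := hCauchy ε hε
    rw [eventually_atTop]
    refine ⟨(N, N), fun b hb => ?_⟩
    rw [Real.dist_eq, sub_zero, abs_of_nonneg (hpos _ _)]
    exact hN b.1 hb.1 b.2 hb.2
  obtain ⟨z, hz1, hz2⟩ := hcomplete x ⟨0, hpair⟩
  have hzz : p z z = 0 := tendsto_nhds_unique hz1 hpair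
  have he : Tendsto (fun n => p (x n) z) atTop (nhds 0) := by rwa [hzz] at hz2
  -- Step 5 : z is a fixed point
  have hd : p z (f z) = 0 := by
    by_contra hne
    have hdpos : 0 < p z (f z) := (hpos z (f z)).lt_of_ne (Ne.symm hne)
    obtain ⟨δ, hδ, hwin⟩ := fp_window hψ hφ hdpos
    have hdnn : 0 ≤ p z (f z) := hpos _ _
    have hev : ∀ᶠ n in atTop, p (x n) z < δ / 3 := he.eventually (gt_mem_nhds (by linarith))
    obtain ⟨N, hN⟩ := eventually_atTop.1 hev
    have h0 : p (x N) z < δ / 3 := hN N le_rfl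
    have h1 : p (x (N + 1)) z < δ / 3 := hN (N + 1) (by omega)
    have h2 : p (x (N + 1 + 1)) z < δ / 3 := hN (N + 1 + 1) (by omega)
    have e1 : f (x N) = x (N + 1) := (hx N).symm
    have e1' : f (x (N + 1)) = x (N + 1 + 1) := (hx (N + 1)).symm
    have e2 : f (f (x N)) = x (N + 1 + 1) := by rw [e1, e1']
    have s1 : p z (x (N + 1)) = p (x (N + 1)) z := hsym _ _
    have hc := hcontr (x N) z
    rw [e1] at hc
    have hub : Mp1 p f (x N) z < p z (f z) + δ := by
      refine fp_Mp1_lt ?_ ?_ ?_ ?_ ?_ ?_ ?_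
      · linarith
      · rw [e1]; linarith [fp_ptri2 hp' (x N) z (x (N + 1))]
      · linarith
      · rw [e2]; linarith
      · rw [e2, e1]; linarith [fp_ptri2 hp' (x (N + 1 + 1)) z (x (N + 1))]
      · rw [e2]; linarith [fp_ptri2 hp' (x (N + 1 + 1)) z (f z)]
      · rw [e1]; linarith [fp_ptri2 hp' (x N) z (f z)]
    have hlbM : p z (f z) ≤ Mp1 p f (x N) z := fp_le_Mp1_3 p f (x N) z
    have hqub : p (x (N + 1)) (f z) < p z (f z) + δ := by
      linarith [fp_ptri2 hp' (x (N + 1)) z (f z)]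
    have hqlb : p z (f z) - δ < p (x (N + 1)) (f z) := by
      linarith [fp_ptri2 hp' z (x (N + 1)) (f z)]
    exact hwin _ _ (hpos _ _) (le_trans hdnn hlbM)
      (abs_lt.2 ⟨by linarith, by linarith⟩)
      (abs_lt.2 ⟨by linarith, by linarith⟩) hc
  have hfzfz : p (f z) (f z) = 0 := by
    refine le_antisymm ?_ (hpos _ _)
    calc p (f z) (f z) ≤ p (f z) z := hsml _ _
      _ = p z (f z) := hsym _ _
      _ = 0 := hd
  have hzeq : z = f z := (heq z (f z)).2 ⟨by rw [hzz, hd], by rw [hfzfz, hd]⟩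
  refine ⟨z, hzeq.symm, hzz, ?_⟩
  simp only [← hx0]
  exact he

end FPAux

/-- Corollary 4.9 (fixed point of a single generalized `(ψ,φ)`-contraction). -/
theorem single_map_generalized_contraction_fixed_point
    {X : Type*} [Nonempty X] (p : X → X → ℝ)
    (hp : IsPartialMetric p) (hcomplete : PComplete p)
    (f : X → X)
    (ψ φ : ℝ → ℝ) (hψ : IsPsiControl ψ) (hφ : IsPhiControl φ)
    (hcontr : ∀ x y : X, ψ (p (f x) (f y)) ≤ ψ (Mp1 p f x y) - φ (Mp1 p f x y)) :
    ∃ z : X, f z = z ∧ (∀ w : X, f w = w → w = z) ∧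
      ∀ x₀ : X, Tendsto (fun n => p (f^[n] x₀) z) atTop (nhds (p z z)) := by
  obtain ⟨z, hz, hzz, -⟩ := fp_main p hp hcomplete f hψ hφ hcontr (Classical.arbitrary X)
  refine ⟨z, hz, fun w hw => fp_unique p hp f hφ hcontr hz hw, fun x₀ => ?_⟩
  obtain ⟨z', hz', hzz', ht⟩ := fp_main p hp hcomplete f hψ hφ hcontr x₀
  have hzeq : z' = z := fp_unique p hp f hφ hcontr hz hz'
  rw [hzz, ← hzeq]
  exact ht
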